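/- Let V be a type with an adjacency relation A : V → V → Prop and an arc-weight function w : V → V → ℝ. Fix a target vertex t ∈ V and, for each u ∈ V, let S(u) ⊆ ℝ be the set of values of paths from u to t. Then for every u ≠ t, the supremum in the extended reals EReal satisfies: sSup (coe '' S(u)) = ⨆ over vertices u' with A u u' of ((w u u' : EReal) + sSup (coe '' S(u'))), where the supremum of the empty set is ⊥ (= −∞). Consequently, the local-bound values ℓ(u) := sSup (coe '' S(u)) are characterized by ℓ(t) ≥ 0 with 0 ∈ S(t), ℓ(u) = ⊥ exactly when no u→t path exists, and the backward (bottom-up) recursion above for u ≠ t. -/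

import Mathlib

/-- A path from `u` to `v` in the directed graph with adjacency `A`. -/
def IsPath {V : Type*} (A : V → V → Prop) (u v : V) (p : List V) : Prop :=
  p ≠ [] ∧ p.head? = some u ∧ p.getLast? = some v ∧ List.Chain' A p

/-- The value of a path: sum of arc weights over consecutive pairs. -/
def pathValue {V : Type*} (w : V → V → ℝ) (p : List V) : ℝ :=
  ((p.zip p.tail).map fun x => w x.1 x.2).sum

/-- The set of values of paths from `u` to the target `t`. -/
def pathValuesTo {V : Type*} (A : V → V → Prop) (w : V → V → ℝ) (t u : V) : Set ℝ :=
  {x | ∃ p, IsPath A u t p ∧ pathValue w p = x}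

lemma ereal_neg_add_add_cancel (c : ℝ) (x : EReal) :
    ((-c : ℝ) : EReal) + ((c : EReal) + x) = x := by
  induction x using EReal.rec with
  | bot => simp [EReal.add_bot]
  | coe x =>
    show ((-c : ℝ) : EReal) + ((c : EReal) + (x : EReal)) = (x : EReal)
    rw [← EReal.coe_add, ← EReal.coe_add]; norm_num
  | top =>
    rw [EReal.coe_add_top, EReal.coe_add_top]

/-- Adding a real constant is an order isomorphism of `EReal`. -/
noncomputable def erealAddIso (c : ℝ) : EReal ≃o EReal where
  toFun x := (c : EReal) + x
  invFun x := (-c : ℝ) + x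
  left_inv x := ereal_neg_add_add_cancel c x
  right_inv x := by
    have := ereal_neg_add_add_cancel (-c) x
    simpa using this
  map_rel_iff' {a b} := by
    simp only [Equiv.coe_fn_mk]
    constructor
    · intro h
      have h2 := add_le_add_right h (((-c : ℝ) : EReal))
      rwa [ereal_neg_add_add_cancel, ereal_neg_add_add_cancel] at h2
    · intro h
      exact add_le_add_right h _

lemma ereal_add_sSup (c : ℝ) (T : Set EReal) :
    (c : EReal) + sSup T = sSup ((fun x => (c : EReal) + x) '' T) := by
  rw [sSup_image]
  exact (erealAddIso c).map_sSup T

lemma pathValue_cons {V : Type*} (w : V → V → ℝ) (u v : V) (r : List V) :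
    pathValue w (u :: v :: r) = w u v + pathValue w (v :: r) := by
  simp [pathValue]

/-- Decomposition of `S u` for `u ≠ t`. -/
lemma pathValuesTo_decomp {V : Type*} (A : V → V → Prop) (w : V → V → ℝ) (t u : V)
    (hu : u ≠ t) :
    pathValuesTo A w t u =
      ⋃ u' : {u' // A u u'}, (fun x => w u u'.1 + x) '' pathValuesTo A w t u'.1 := by
  ext x
  simp only [Set.mem_iUnion, Set.mem_image, pathValuesTo, Set.mem_setOf_eq]
  constructor
  · rintro ⟨p, ⟨hne, hhead, hlast, hchain⟩, hval⟩
    match p, hne with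
    | [a], _ =>
      exfalso
      simp only [List.head?, Option.some_inj] at hhead
      simp only [List.getLast?, Option.some_inj] at hlast
      exact hu (hhead ▸ hlast ▸ rfl)
    | a :: b :: r, _ =>
      simp only [List.head?, Option.some_inj] at hhead
      subst hhead
      obtain ⟨hab, hchain'⟩ := List.isChain_cons_cons.1 hchain
      refine ⟨⟨b, hab⟩, pathValue w (b :: r),
        ⟨b :: r, ⟨List.cons_ne_nil _ _, rfl, ?_, hchain'⟩, rfl⟩, ?_⟩
      · rw [← hlast]
        exact (List.getLast?_cons_cons ..).symm
      · rw [← hval, pathValue_cons]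
  · rintro ⟨⟨v, hA⟩, y, ⟨q, ⟨hne, hhead, hlast, hchain⟩, hval⟩, rfl⟩
    match q, hne, hhead, hlast, hchain, hval with
    | b :: r, _, hhead, hlast, hchain, hval =>
      simp only [List.head?, Option.some_inj] at hhead
      refine ⟨u :: b :: r, ⟨List.cons_ne_nil _ _, rfl, ?_,
        List.isChain_cons_cons.2 ⟨hhead ▸ hA, hchain⟩⟩, ?_⟩
      · rw [List.getLast?_cons_cons]; exact hlast
      · rw [pathValue_cons, hval]
        simp [hhead]

theorem local_bound_recursion {V : Type*} (A : V → V → Prop) (w : V → V → ℝ) (t : V) :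
    (0 ∈ pathValuesTo A w t t) ∧
    ((0 : EReal) ≤ sSup (Real.toEReal '' pathValuesTo A w t t)) ∧
    (∀ u, sSup (Real.toEReal '' pathValuesTo A w t u) = ⊥ ↔ ¬ ∃ p, IsPath A u t p) ∧
    (∀ u, u ≠ t →
      sSup (Real.toEReal '' pathValuesTo A w t u) =
        ⨆ u' : {u' // A u u'}, ((w u u' : EReal) +
          sSup (Real.toEReal '' pathValuesTo A w t u'))) := by
  have hmem : 0 ∈ pathValuesTo A w t t := by
    refine ⟨[t], ⟨List.cons_ne_nil _ _, rfl, rfl, List.isChain_singleton _⟩, ?_⟩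
    simp [pathValue]
  refine ⟨hmem, ?_, ?_, ?_⟩
  · have : ((0 : ℝ) : EReal) ∈ Real.toEReal '' pathValuesTo A w t t :=
      ⟨0, hmem, rfl⟩
    simpa using le_sSup this
  · intro u
    rw [sSup_eq_bot]
    constructor
    · intro h ⟨p, hp⟩
      have := h (Real.toEReal (pathValue w p)) ⟨pathValue w p, ⟨p, hp, rfl⟩, rfl⟩
      exact EReal.coe_ne_bot _ this
    · rintro h x ⟨y, ⟨p, hp, _⟩, rfl⟩
      exact absurd ⟨p, hp⟩ h
  · intro u hu
    rw [pathValuesTo_decomp A w t u hu, Set.image_iUnion, sSup_iUnion]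
    congr 1
    ext ⟨v, hA⟩
    rw [ereal_add_sSup]
    congr 1
    ext x
    simp only [Set.mem_image, Set.mem_setOf_eq]
    constructor
    · rintro ⟨y, ⟨z, hz, rfl⟩, rfl⟩
      exact ⟨Real.toEReal z, ⟨z, hz, rfl⟩, (EReal.coe_add _ _)⟩
    · rintro ⟨y, ⟨z, hz, rfl⟩, rfl⟩
      exact ⟨w u v + z, ⟨z, hz, rfl⟩, (EReal.coe_add _ _).symm⟩
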